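/- Let ε and η be non-trivial scales with ε < η (i.e. lim_ω ε_n/η_n = 0). Then for every sequence z : ℕ → ℂ, one has lim_ω |z_n|^{η_n} < ∞ if and only if for every scale η' satisfying ε ≤ η' and η' < η one has lim_ω |z_n|^{η'_n} ≤ 1. -/

import Mathlib

open Filter

/-- The ω-limit of a sequence in the compact space `[0,∞]`; for an ultrafilter this
equals the `limsup` along the ultrafilter. -/
noncomputable def limw (ω : Ultrafilter ℕ) (a : ℕ → ENNReal) : ENNReal :=
  Filter.limsup a (ω : Filter ℕ)

/-- `lim_ω |z_n|^{η_n}` viewed in `[0,∞]`. -/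
noncomputable def limNorm (ω : Ultrafilter ℕ) (η : ℕ → ℝ) (z : ℕ → ℂ) : ENNReal :=
  limw ω (fun n => ENNReal.ofReal (‖z n‖ ^ η n))

/-- A scale is a sequence with values in `(0,1]`. -/
def IsScale (η : ℕ → ℝ) : Prop := ∀ n, 0 < η n ∧ η n ≤ 1

/-- `lim_ω η_n / η'_n` in `[0,∞]`. -/
noncomputable def scaleRatio (ω : Ultrafilter ℕ) (η η' : ℕ → ℝ) : ENNReal :=
  limw ω (fun n => ENNReal.ofReal (η n / η' n))

/-- `η ≤ η'` iff `lim_ω η_n/η'_n < ∞`. -/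
def ScaleLE (ω : Ultrafilter ℕ) (η η' : ℕ → ℝ) : Prop := scaleRatio ω η η' ≠ ⊤

/-- `η < η'` iff `lim_ω η_n/η'_n = 0`. -/
def ScaleLT (ω : Ultrafilter ℕ) (η η' : ℕ → ℝ) : Prop := scaleRatio ω η η' = 0

/-- A scale is non-trivial if `lim_ω ε_n = 0`. -/
def NontrivialScale (ω : Ultrafilter ℕ) (ε : ℕ → ℝ) : Prop :=
  limw ω (fun n => ENNReal.ofReal (ε n)) = 0

/-- Two scales are equivalent if `C⁻¹ η_n ≤ η'_n ≤ C η_n` ω-almost surely for some `C > 1`. -/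
def ScaleEquiv (ω : Ultrafilter ℕ) (η η' : ℕ → ℝ) : Prop :=
  ∃ C : ℝ, 1 < C ∧ {n | C⁻¹ * η n ≤ η' n ∧ η' n ≤ C * η n} ∈ ω

/-- STATEMENT 5: for non-trivial scales `ε < η`, one has `lim_ω |z_n|^{η_n} < ∞` iff for every
scale `η'` with `ε ≤ η'` and `η' < η` one has `lim_ω |z_n|^{η'_n} ≤ 1`. -/
theorem stmt5 (ω : Ultrafilter ℕ) (hω : ∀ s : Set ℕ, sᶜ.Finite → s ∈ ω)
    (ε η : ℕ → ℝ) (hε : IsScale ε) (hη : IsScale η)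
    (hεnt : NontrivialScale ω ε) (hηnt : NontrivialScale ω η)
    (hlt : ScaleLT ω ε η) (z : ℕ → ℂ) :
    limNorm ω η z ≠ ⊤ ↔
      ∀ η' : ℕ → ℝ, IsScale η' → ScaleLE ω ε η' → ScaleLT ω η' η →
        limNorm ω η' z ≤ 1 := by
  set a : ℕ → ℝ := fun n => ‖z n‖ ^ η n with ha
  have ha_nonneg : ∀ n, 0 ≤ a n := fun n => Real.rpow_nonneg (norm_nonneg _) _
  have hLN : limNorm ω η z = Filter.limsup (fun n => ENNReal.ofReal (a n)) (ω : Filter ℕ) := rfl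
  -- if ScaleLT u v then the ratio is eventually < δ
  have hratio : ∀ (u v : ℕ → ℝ), ScaleLT ω u v → ∀ δ : ℝ, 0 < δ →
      ∀ᶠ n in (ω : Filter ℕ), u n / v n < δ := by
    intro u v h δ hδ
    have h1 : Filter.limsup (fun n => ENNReal.ofReal (u n / v n)) (ω : Filter ℕ)
        < ENNReal.ofReal δ := by
      have : scaleRatio ω u v = 0 := h
      rw [scaleRatio, limw] at this
      rw [this]
      exact ENNReal.ofReal_pos.2 hδ
    exact (Filter.eventually_lt_of_limsup_lt h1).mono fun n hn =>
      (ENNReal.ofReal_lt_ofReal_iff hδ).1 hn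
  constructor
  · -- forward direction
    intro hfin η' hη' _ hlt'
    have hLN' : limNorm ω η' z
        = Filter.limsup (fun n => ENNReal.ofReal (‖z n‖ ^ η' n)) (ω : Filter ℕ) := rfl
    have h1 : limNorm ω η z < limNorm ω η z + 1 :=
      ENNReal.lt_add_right hfin one_ne_zero
    rw [hLN] at h1
    have hb : ∀ᶠ n in (ω : Filter ℕ),
        ENNReal.ofReal (a n) < limNorm ω η z + 1 := by
      have := Filter.eventually_lt_of_limsup_lt h1
      exact this
    set M : ℝ := max ((limNorm ω η z + 1).toReal) (Real.exp 1) with hMdef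
    have hM1 : 1 < M := by
      have h2 : (1 : ℝ) + 1 ≤ Real.exp 1 := Real.add_one_le_exp 1
      have : (1 : ℝ) < Real.exp 1 := by linarith
      exact lt_of_lt_of_le this (le_max_right _ _)
    have hlogM : 0 < Real.log M := Real.log_pos hM1
    have hnt : limNorm ω η z + 1 ≠ ⊤ := ENNReal.add_ne_top.2 ⟨hfin, ENNReal.one_ne_top⟩
    have hbM : ∀ᶠ n in (ω : Filter ℕ), a n ≤ M := by
      refine hb.mono fun n hn => ?_
      have h2 : a n < (limNorm ω η z + 1).toReal :=
        (ENNReal.ofReal_lt_iff_lt_toReal (ha_nonneg n) hnt).1 hn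
      exact h2.le.trans (le_max_left _ _)
    have key : ∀ c : ℝ, 1 < c → limNorm ω η' z ≤ ENNReal.ofReal c := by
      intro c hc
      set δ : ℝ := Real.log c / Real.log M with hδdef
      have hδ : 0 < δ := div_pos (Real.log_pos hc) hlogM
      have hsmall : ∀ᶠ n in (ω : Filter ℕ), η' n / η n < δ := hratio η' η hlt' δ hδ
      rw [hLN']
      apply Filter.limsup_le_of_le (by isBoundedDefault)
      filter_upwards [hbM, hsmall] with n h1 h2
      apply ENNReal.ofReal_le_ofReal
      have hηpos := (hη n).1
      have hmul : η n * (η' n / η n) = η' n := by field_simp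
      calc ‖z n‖ ^ η' n
          = (a n) ^ (η' n / η n) := by
            show _ = (‖z n‖ ^ η n) ^ (η' n / η n)
            rw [← Real.rpow_mul (norm_nonneg _), hmul]
        _ ≤ M ^ (η' n / η n) :=
            Real.rpow_le_rpow (ha_nonneg n) h1 (div_pos (hη' n).1 hηpos).le
        _ ≤ M ^ δ := Real.rpow_le_rpow_of_exponent_le hM1.le h2.le
        _ = c := by
            rw [Real.rpow_def_of_pos (lt_trans one_pos hM1), hδdef]
            have : Real.log M * (Real.log c / Real.log M) = Real.log c := by
              field_simp
            rw [this, Real.exp_log (lt_trans one_pos hc)]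
    by_contra hcon
    push_neg at hcon
    obtain ⟨r, hr0, h1r, hrl⟩ := ENNReal.lt_iff_exists_real_btwn.1 hcon
    have hr1 : 1 < r := ENNReal.one_lt_ofReal.1 h1r
    exact absurd (key r hr1) (not_le.2 hrl)
  · -- backward direction
    intro hall
    by_contra hfin
    -- a n → ∞ along ω
    have hbig : ∀ M : ℝ, ∀ᶠ n in (ω : Filter ℕ), M < a n := by
      intro M
      by_contra hn
      have hle : ∀ᶠ n in (ω : Filter ℕ), a n ≤ M := by
        have := (Ultrafilter.eventually_not (f := ω) (p := fun n => M < a n)).2 hn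
        exact this.mono fun n h => not_lt.1 h
      have : limNorm ω η z ≤ ENNReal.ofReal M := by
        rw [hLN]
        exact Filter.limsup_le_of_le (by isBoundedDefault)
          (hle.mono fun n h => ENNReal.ofReal_le_ofReal h)
      rw [hfin] at this
      exact (ENNReal.ofReal_ne_top (top_le_iff.1 this)).elim
    set s : ℕ → ℝ := fun n => Real.sqrt (Real.log (a n)) with hs
    set η' : ℕ → ℝ := fun n => if Real.exp 1 < a n then max (ε n) (η n / s n) else η n with hη'def
    have hcondfacts : ∀ n, Real.exp 1 < a n →
        0 < a n ∧ 1 < Real.log (a n) ∧ 1 < s n ∧ η' n = max (ε n) (η n / s n) := by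
      intro n hn
      have hapos : 0 < a n := lt_trans (Real.exp_pos 1) hn
      have hlog : 1 < Real.log (a n) := (Real.lt_log_iff_exp_lt hapos).2 hn
      have hs1 : 1 < s n := by
        rw [hs]
        exact (Real.lt_sqrt zero_le_one).2 (by nlinarith)
      exact ⟨hapos, hlog, hs1, if_pos hn⟩
    have hscale' : IsScale η' := by
      intro n
      by_cases h : Real.exp 1 < a n
      · obtain ⟨hapos, hlog, hs1, heq⟩ := hcondfacts n h
        rw [heq]
        constructor
        · exact lt_of_lt_of_le (hε n).1 (le_max_left _ _)
        · apply max_le (hε n).2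
          rw [div_le_one (lt_trans one_pos hs1)]
          exact (hη n).2.trans hs1.le
      · rw [hη'def]
        simp only [if_neg h]
        exact hη n
    have hS : ∀ᶠ n in (ω : Filter ℕ), Real.exp 1 < a n := hbig _
    have hle' : ScaleLE ω ε η' := by
      have hub : scaleRatio ω ε η' ≤ 1 := by
        rw [scaleRatio, limw]
        apply Filter.limsup_le_of_le (by isBoundedDefault)
        refine hS.mono fun n hn => ?_
        obtain ⟨hapos, hlog, hs1, heq⟩ := hcondfacts n hn
        have hη'pos : 0 < η' n := (hscale' n).1
        have : ε n / η' n ≤ 1 := by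
          rw [div_le_one hη'pos, heq]
          exact le_max_left _ _
        calc ENNReal.ofReal (ε n / η' n) ≤ ENNReal.ofReal 1 := ENNReal.ofReal_le_ofReal this
          _ = 1 := ENNReal.ofReal_one
      exact fun h => ENNReal.one_ne_top (top_le_iff.1 (h ▸ hub))
    have hlt2 : ScaleLT ω η' η := by
      have key2 : ∀ c : ℝ, 0 < c → scaleRatio ω η' η ≤ ENNReal.ofReal c := by
        intro c hc
        have hA := hratio ε η hlt c hc
        have hB := hbig (Real.exp (1 + c⁻¹ ^ 2))
        rw [scaleRatio, limw]
        apply Filter.limsup_le_of_le (by isBoundedDefault)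
        filter_upwards [hA, hB] with n h1 h2
        have hcond : Real.exp 1 < a n :=
          lt_of_le_of_lt (Real.exp_le_exp.2 (by nlinarith [sq_nonneg c⁻¹])) h2
        obtain ⟨hapos, hlog, hs1, heq⟩ := hcondfacts n hcond
        have hlog2 : 1 + c⁻¹ ^ 2 < Real.log (a n) := (Real.lt_log_iff_exp_lt hapos).2 h2
        have hspos : 0 < s n := lt_trans one_pos hs1
        have hsc : c⁻¹ < s n := by
          rw [hs]
          exact (Real.lt_sqrt (inv_nonneg.2 hc.le)).2 (by nlinarith)
        have hsinv : 1 / s n < c := by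
          rw [div_lt_iff₀ hspos]
          calc (1 : ℝ) = c * c⁻¹ := (mul_inv_cancel₀ hc.ne').symm
            _ < c * s n := by exact mul_lt_mul_of_pos_left hsc hc
        have hηpos := (hη n).1
        have hmax : η' n / η n ≤ c := by
          rw [heq, ← max_div_div_right hηpos.le]
          apply max_le h1.le
          have : η n / s n / η n = 1 / s n := by
            rw [div_right_comm, div_self hηpos.ne']
          rw [this]
          exact hsinv.le
        exact ENNReal.ofReal_le_ofReal hmax
      by_contra hne
      have hpos : 0 < scaleRatio ω η' η := pos_iff_ne_zero.2 hne
      obtain ⟨r, hr0, h0r, hrl⟩ := ENNReal.lt_iff_exists_real_btwn.1 hpos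
      have : 0 < r := ENNReal.ofReal_pos.1 h0r
      exact absurd (key2 r this) (not_le.2 hrl)
    have h2 := hall η' hscale' hle' hlt2
    have hexp2 : (1 : ℝ) < Real.exp 2 := by
      have := Real.add_one_le_exp 2
      linarith
    have hlt3 : limNorm ω η' z < ENNReal.ofReal (Real.exp 2) :=
      lt_of_le_of_lt h2 (ENNReal.one_lt_ofReal.2 hexp2)
    have hLN' : limNorm ω η' z
        = Filter.limsup (fun n => ENNReal.ofReal (‖z n‖ ^ η' n)) (ω : Filter ℕ) := rfl
    rw [hLN'] at hlt3
    have hev : ∀ᶠ n in (ω : Filter ℕ),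
        ENNReal.ofReal (‖z n‖ ^ η' n) < ENNReal.ofReal (Real.exp 2) :=
      Filter.eventually_lt_of_limsup_lt hlt3
    obtain ⟨n, hn1, hn2⟩ := (hev.and (hbig (Real.exp 4))).exists
    have h1exp4 : (1 : ℝ) < Real.exp 4 := by
      have := Real.add_one_le_exp 4
      linarith
    have hcond : Real.exp 1 < a n :=
      lt_trans (Real.exp_lt_exp.2 (by norm_num : (1:ℝ) < 4)) hn2
    obtain ⟨hapos, hlog, hs1, heq⟩ := hcondfacts n hcond
    have hlog4 : 4 < Real.log (a n) := (Real.lt_log_iff_exp_lt hapos).2 hn2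
    have hspos : 0 < s n := lt_trans one_pos hs1
    have hs2 : 2 < s n := by
      rw [hs]
      exact (Real.lt_sqrt (by norm_num)).2 (by nlinarith)
    have ha1 : 1 ≤ a n := (lt_trans h1exp4 hn2).le
    have habs1 : 1 ≤ ‖z n‖ := by
      by_contra h
      push_neg at h
      have : a n ≤ 1 := Real.rpow_le_one (norm_nonneg _) h.le (hη n).1.le
      linarith [lt_trans h1exp4 hn2]
    have hηpos := (hη n).1
    have hη'ge : η n / s n ≤ η' n := heq ▸ le_max_right _ _
    have hexpcmp : (s n)⁻¹ ≤ η' n / η n := by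
      have h3 : η n / s n / η n ≤ η' n / η n := by
        apply div_le_div_of_nonneg_right hη'ge hηpos.le
      rwa [div_right_comm, div_self hηpos.ne', one_div] at h3
    have hfinal : Real.exp 2 ≤ ‖z n‖ ^ η' n := by
      have hmul : η n * (η' n / η n) = η' n := by field_simp
      have e1 : ‖z n‖ ^ η' n = a n ^ (η' n / η n) := by
        show ‖z n‖ ^ η' n = (‖z n‖ ^ η n) ^ (η' n / η n)
        rw [← Real.rpow_mul (norm_nonneg _), hmul]
      rw [e1]
      have e2 : a n ^ ((s n)⁻¹) = Real.exp (s n) := by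
        rw [Real.rpow_def_of_pos hapos]
        congr 1
        have hls : Real.log (a n) = s n * s n :=
          (Real.mul_self_sqrt (by linarith : (0:ℝ) ≤ Real.log (a n))).symm
        rw [hls, mul_inv_cancel_right₀ hspos.ne']
      calc Real.exp 2 ≤ Real.exp (s n) := Real.exp_le_exp.2 hs2.le
        _ = a n ^ ((s n)⁻¹) := e2.symm
        _ ≤ a n ^ (η' n / η n) := Real.rpow_le_rpow_of_exponent_le ha1 hexpcmp
    have hcontra : ‖z n‖ ^ η' n < Real.exp 2 :=
      (ENNReal.ofReal_lt_ofReal_iff (Real.exp_pos 2)).1 hn1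
    linarith
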